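/- Let G be a finite simple graph and let H' be a connected graph, H a graph with a connected component isomorphic to H'. Writing N_H(G,k) for the number of induced copies of H in the coloring graph C_k(G), we have n_{H'}(H)·N_H(G,k) = N_{H'}(G,k)·N_{H∖H'}(G,k) − Σ_{U ∈ J(H', H∖H')∖{H}} f_U(H', H∖H')·N_U(G,k), where n_{H'}(H) is the number of components of H isomorphic to H', J(A,B) is the set of (isomorphism classes of) graphs whose vertex set is covered by an induced copy of A and an induced copy of B, and f_U(A,B) counts ordered pairs (V_A, V_B) of vertex subsets of U with V_A ∪ V_B = V(U), U[V_A] ≅ A, and U[V_B] ≅ B. -/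

import Mathlib

/-- The `k`-coloring graph of `G`: vertices are proper `k`-colorings of `G`, and two
colorings are adjacent iff they differ at exactly one vertex. -/
def coloringGraph {V : Type} (G : SimpleGraph V) (k : ℕ) :
    SimpleGraph {f : V → Fin k // ∀ u w, G.Adj u w → f u ≠ f w} :=
  SimpleGraph.fromRel (fun f g => ∃ v, ∀ u, u ≠ v → f.1 u = g.1 u)

/-- The number of induced copies of `H` in `X` (vertex subsets inducing a graph
isomorphic to `H`). -/
noncomputable def numInduced {W β : Type} (X : SimpleGraph W) (H : SimpleGraph β) : ℕ :=
  Nat.card {s : Set W // Nonempty ((X.induce s) ≃g H)}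

/-- `U ∈ J(A, B)`: the vertex set of `U` is covered by an induced copy of `A` and an
induced copy of `B`. -/
def memJ {γ α β : Type} (U : SimpleGraph γ) (A : SimpleGraph α) (B : SimpleGraph β) :
    Prop :=
  ∃ VA VB : Set γ, VA ∪ VB = Set.univ ∧
    Nonempty ((U.induce VA) ≃g A) ∧ Nonempty ((U.induce VB) ≃g B)

/-- `f_U(A, B)`: the number of ordered pairs `(V_A, V_B)` of vertex subsets of `U`
covering `V(U)` with `U[V_A] ≅ A` and `U[V_B] ≅ B`. -/
noncomputable def coverPairs {γ α β : Type} (U : SimpleGraph γ) (A : SimpleGraph α)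
    (B : SimpleGraph β) : ℕ :=
  Nat.card {p : Set γ × Set γ //
    p.1 ∪ p.2 = Set.univ ∧
    Nonempty ((U.induce p.1) ≃g A) ∧ Nonempty ((U.induce p.2) ≃g B)}

/-- `n_{A}(H)`: the number of connected components of `H` isomorphic (as an induced
subgraph of `H`) to `A`. -/
noncomputable def numCompsIso {β α : Type} (H : SimpleGraph β) (A : SimpleGraph α) : ℕ :=
  Nat.card {c : H.ConnectedComponent // Nonempty ((H.induce c.supp) ≃g A)}

open SimpleGraph Set

section Helpers
variable {α β γ δ : Type*}

/-- Iso between induced subgraphs along an ambient iso. -/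
def isoInduceImage {X : SimpleGraph α} {Y : SimpleGraph β} (e : X ≃g Y) (s : Set α) :
    X.induce s ≃g Y.induce (e '' s) where
  toEquiv := e.toEquiv.image s
  map_rel_iff' := by
    intro a b
    simp only [Equiv.image, Equiv.coe_fn_mk, comap_adj, Function.Embedding.coe_subtype]
    exact e.map_rel_iff

/-- Nested induce. -/
noncomputable def isoInduceInduce (X : SimpleGraph α) (s : Set α) (t : Set s) :
    (X.induce s).induce t ≃g X.induce (Subtype.val '' t) where
  toEquiv := Equiv.Set.image Subtype.val t Subtype.val_injective
  map_rel_iff' := by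
    intro a b
    simp [Equiv.Set.image, Equiv.Set.imageOfInjOn]

/-- Induce along a set equality. -/
def isoSetCongr (X : SimpleGraph α) {s t : Set α} (h : s = t) : X.induce s ≃g X.induce t := by
  subst h; rfl

/-- Congruence of disjoint sums. -/
def isoSumCongr {A : SimpleGraph α} {B : SimpleGraph β} {A' : SimpleGraph γ} {B' : SimpleGraph δ}
    (e₁ : A ≃g A') (e₂ : B ≃g B') : A ⊕g B ≃g A' ⊕g B' :=
  ⟨Equiv.sumCongr e₁.toEquiv e₂.toEquiv, by
    intro u v
    cases u <;> cases v <;> simp [e₁.map_rel_iff, e₂.map_rel_iff]⟩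

/-- A graph is isomorphic to the sum of the graphs induced on an adjacency-closed set and its
complement. -/
def isoSumCompl (Y : SimpleGraph α) (s : Set α) [DecidablePred (· ∈ s)]
    (h : ∀ ⦃a b⦄, Y.Adj a b → (a ∈ s ↔ b ∈ s)) :
    (Y.induce s ⊕g Y.induce sᶜ) ≃g Y where
  toEquiv := Equiv.Set.sumCompl s
  map_rel_iff' := by
    rintro (a | a) (b | b)
    · simp
    · simp only [Equiv.Set.sumCompl_apply_inl, Equiv.Set.sumCompl_apply_inr, sum_adj]
      exact ⟨fun hadj => absurd ((h hadj).mp a.2) b.2, fun hf => hf.elim⟩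
    · simp only [Equiv.Set.sumCompl_apply_inl, Equiv.Set.sumCompl_apply_inr, sum_adj]
      exact ⟨fun hadj => absurd ((h hadj).mpr b.2) a.2, fun hf => hf.elim⟩
    · simp

lemma mem_of_walk {Y : SimpleGraph α} {s : Set α}
    (h : ∀ ⦃a b⦄, Y.Adj a b → (a ∈ s ↔ b ∈ s)) {a b : α} (w : Y.Walk a b) : a ∈ s → b ∈ s := by
  induction w with
  | nil => exact id
  | cons huv p ih => exact fun ha => ih ((h huv).mp ha)

lemma supp_closed {Y : SimpleGraph α} (c : Y.ConnectedComponent) :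
    ∀ ⦃a b⦄, Y.Adj a b → (a ∈ c.supp ↔ b ∈ c.supp) := by
  intro a b hab
  simp only [ConnectedComponent.mem_supp_iff]
  rw [ConnectedComponent.connectedComponentMk_eq_of_adj hab]

lemma eq_supp_of_connected {Y : SimpleGraph α} {s : Set α} (hconn : (Y.induce s).Connected)
    (hcl : ∀ ⦃a b⦄, Y.Adj a b → (a ∈ s ↔ b ∈ s)) :
    ∃ c : Y.ConnectedComponent, s = c.supp := by
  obtain ⟨⟨a, ha⟩⟩ := hconn.nonempty
  refine ⟨Y.connectedComponentMk a, ?_⟩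
  ext b
  simp only [ConnectedComponent.mem_supp_iff, ConnectedComponent.eq]
  constructor
  · intro hb
    have := hconn.preconnected ⟨b, hb⟩ ⟨a, ha⟩
    exact this.map (SimpleGraph.Embedding.induce s).toHom
  · intro hr
    obtain ⟨w⟩ := hr.symm
    exact mem_of_walk hcl w ha

end Helpers

section Invar
variable {α β γ δ : Type}

lemma numInduced_congr {X : SimpleGraph α} {A : SimpleGraph γ} {B : SimpleGraph δ}
    (e : A ≃g B) : numInduced X A = numInduced X B :=
  Nat.card_congr <| Equiv.subtypeEquiv (Equiv.refl _) fun _ =>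
    ⟨fun ⟨f⟩ => ⟨f.trans e⟩, fun ⟨f⟩ => ⟨f.trans e.symm⟩⟩

lemma memJ_congr {U : SimpleGraph α} {U' : SimpleGraph β} (e : U ≃g U')
    {A : SimpleGraph γ} {B : SimpleGraph δ} (h : memJ U A B) : memJ U' A B := by
  obtain ⟨VA, VB, hcov, ⟨fA⟩, ⟨fB⟩⟩ := h
  refine ⟨e '' VA, e '' VB, ?_, ⟨(isoInduceImage e VA).symm.trans fA⟩,
    ⟨(isoInduceImage e VB).symm.trans fB⟩⟩
  rw [← Set.image_union, hcov, Set.image_univ]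
  exact Set.eq_univ_of_forall fun x => ⟨e.symm x, e.apply_symm_apply x⟩

lemma coverPairs_congr {U : SimpleGraph α} {U' : SimpleGraph β} (e : U ≃g U')
    {A : SimpleGraph γ} {B : SimpleGraph δ} : coverPairs U A B = coverPairs U' A B := by
  refine Nat.card_congr ?_
  refine { toFun := fun p => ⟨(e '' p.1.1, e '' p.1.2), ?_, ?_, ?_⟩,
           invFun := fun q => ⟨(e.symm '' q.1.1, e.symm '' q.1.2), ?_, ?_, ?_⟩,
           left_inv := ?_, right_inv := ?_ }
  · rw [← Set.image_union, p.2.1, Set.image_univ]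
    exact Set.eq_univ_of_forall fun x => ⟨e.symm x, e.apply_symm_apply x⟩
  · exact ⟨(isoInduceImage e p.1.1).symm.trans p.2.2.1.some⟩
  · exact ⟨(isoInduceImage e p.1.2).symm.trans p.2.2.2.some⟩
  · rw [← Set.image_union, q.2.1, Set.image_univ]
    exact Set.eq_univ_of_forall fun x => ⟨e x, e.symm_apply_apply x⟩
  · exact ⟨(isoInduceImage e.symm q.1.1).symm.trans q.2.2.1.some⟩
  · exact ⟨(isoInduceImage e.symm q.1.2).symm.trans q.2.2.2.some⟩
  · intro p
    apply Subtype.ext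
    apply Prod.ext <;>
      · ext x
        simp only [← Set.image_comp, Function.comp, e.symm_apply_apply, Set.image_id']
  · intro q
    apply Subtype.ext
    apply Prod.ext <;>
      · ext x
        simp only [← Set.image_comp, Function.comp, e.apply_symm_apply, Set.image_id']

noncomputable def toFinGraphIso (X : SimpleGraph γ) [Fintype γ] :
    X ≃g X.comap ((Fintype.equivFin γ).symm : Fin (Fintype.card γ) → γ) :=
  ⟨Fintype.equivFin γ, by simp⟩

lemma eq_of_le_of_iso {Y Z : SimpleGraph γ} [Fintype γ] (hle : Y ≤ Z) (e : Y ≃g Z) : Y = Z := by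
  apply SimpleGraph.edgeSet_injective
  refine Set.eq_of_subset_of_ncard_le (SimpleGraph.edgeSet_mono hle) ?_ (Set.toFinite _)
  rw [← Nat.card_coe_set_eq, ← Nat.card_coe_set_eq]
  exact le_of_eq (Nat.card_congr e.mapEdgeSet.symm)

end Invar

section Core
variable {β₁ β₂ : Type} [Fintype β₁] [Fintype β₂] (H₁ : SimpleGraph β₁) (H₂ : SimpleGraph β₂)

noncomputable def isoInduceInr (t : Set β₂) :
    H₂.induce t ≃g (H₁ ⊕g H₂).induce (Sum.inr '' t) where
  toEquiv := Equiv.Set.image Sum.inr t Sum.inr_injective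
  map_rel_iff' := by
    intro a b
    simp [Equiv.Set.image, Equiv.Set.imageOfInjOn]

noncomputable def isoInduceInl (t : Set β₁) :
    H₁.induce t ≃g (H₁ ⊕g H₂).induce (Sum.inl '' t) where
  toEquiv := Equiv.Set.image Sum.inl t Sum.inl_injective
  map_rel_iff' := by
    intro a b
    simp [Equiv.Set.image, Equiv.Set.imageOfInjOn]

noncomputable def isoInduceRangeInl : (H₁ ⊕g H₂).induce (Set.range Sum.inl) ≃g H₁ :=
  (((isoSetCongr (H₁ ⊕g H₂) (Set.image_univ (f := Sum.inl)).symm).trans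
    (isoInduceInl H₁ H₂ Set.univ).symm).trans (induceUnivIso H₁))

noncomputable def isoInduceRangeInr : (H₁ ⊕g H₂).induce (Set.range Sum.inr) ≃g H₂ :=
  (((isoSetCongr (H₁ ⊕g H₂) (Set.image_univ (f := Sum.inr)).symm).trans
    (isoInduceInr H₁ H₂ Set.univ).symm).trans (induceUnivIso H₂))

omit [Fintype β₁] [Fintype β₂] in
lemma sum_closed_inl : ∀ ⦃a b : β₁ ⊕ β₂⦄, (H₁ ⊕g H₂).Adj a b →
    (a ∈ Set.range Sum.inl ↔ b ∈ Set.range Sum.inl) := by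
  rintro (a | a) (b | b) hab <;> simp_all

omit [Fintype β₁] [Fintype β₂] in
lemma sum_closed_inr : ∀ ⦃a b : β₁ ⊕ β₂⦄, (H₁ ⊕g H₂).Adj a b →
    (a ∈ Set.range Sum.inr ↔ b ∈ Set.range Sum.inr) := by
  rintro (a | a) (b | b) hab <;> simp_all

lemma compl_supp_iso (hconn : H₁.Connected) (c : (H₁ ⊕g H₂).ConnectedComponent)
    (hc : Nonempty ((H₁ ⊕g H₂).induce c.supp ≃g H₁)) :
    Nonempty ((H₁ ⊕g H₂).induce (c.suppᶜ) ≃g H₂) := by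
  classical
  obtain ⟨v, hv⟩ := Quot.exists_rep c
  have hv : (H₁ ⊕g H₂).connectedComponentMk v = c := hv
  rcases v with a | a
  · -- left case: the component is the whole left side
    have hsupp : c.supp = Set.range Sum.inl := by
      ext x
      simp only [ConnectedComponent.mem_supp_iff]
      constructor
      · intro hx
        have hr : (H₁ ⊕g H₂).Reachable (Sum.inl a) x :=
          (ConnectedComponent.eq.mp (hx.trans hv.symm)).symm
        obtain ⟨w⟩ := hr
        exact mem_of_walk (sum_closed_inl H₁ H₂) w ⟨a, rfl⟩
      · rintro ⟨b, rfl⟩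
        rw [← hv]
        exact ConnectedComponent.eq.mpr
          ((hconn.preconnected b a).map (Embedding.sumInl (G := H₁) (H := H₂)).toHom)
    rw [hsupp, Set.compl_range_inl]
    exact ⟨isoInduceRangeInr H₁ H₂⟩
  · -- right case
    have hsub : c.supp ⊆ Set.range Sum.inr := by
      intro x hx
      have hx' : (H₁ ⊕g H₂).connectedComponentMk x = c := hx
      have hr : (H₁ ⊕g H₂).Reachable (Sum.inr a) x :=
        (ConnectedComponent.eq.mp (hx'.trans hv.symm)).symm
      obtain ⟨w⟩ := hr
      exact mem_of_walk (sum_closed_inr H₁ H₂) w ⟨a, rfl⟩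
    set t : Set β₂ := Sum.inr ⁻¹' c.supp with ht
    have himg : Sum.inr '' t = c.supp := Set.image_preimage_eq_of_subset hsub
    have tcl : ∀ ⦃x y : β₂⦄, H₂.Adj x y → (x ∈ t ↔ y ∈ t) := by
      intro x y hxy
      exact supp_closed c (by simp [hxy] : (H₁ ⊕g H₂).Adj (Sum.inr x) (Sum.inr y))
    obtain ⟨f⟩ := hc
    have e_t : H₂.induce t ≃g H₁ :=
      ((isoInduceInr H₁ H₂ t).trans (isoSetCongr _ himg)).trans f
    set Y := (H₁ ⊕g H₂).induce c.suppᶜ with hY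
    set u : Set ↥(c.suppᶜ) := {x | x.1 ∈ Set.range Sum.inl} with hu
    have ucl : ∀ ⦃x y : ↥(c.suppᶜ)⦄, Y.Adj x y → (x ∈ u ↔ y ∈ u) := by
      intro x y hxy
      exact sum_closed_inl H₁ H₂ hxy
    have hval_u : Subtype.val '' u = Set.range Sum.inl := by
      ext x
      constructor
      · rintro ⟨⟨y, hy⟩, hyu, rfl⟩
        exact hyu
      · rintro ⟨b, rfl⟩
        refine ⟨⟨Sum.inl b, ?_⟩, ⟨b, rfl⟩, rfl⟩
        intro hmem
        rcases hsub hmem with ⟨b', hb'⟩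
        cases hb'
    have hval_uc : Subtype.val '' uᶜ = Sum.inr '' tᶜ := by
      ext x
      constructor
      · rintro ⟨⟨y, hy⟩, hyu, rfl⟩
        rcases y with b | b
        · exact absurd ⟨b, rfl⟩ hyu
        · exact ⟨b, hy, rfl⟩
      · rintro ⟨b, hbt, rfl⟩
        refine ⟨⟨Sum.inr b, hbt⟩, ?_, rfl⟩
        rintro ⟨b', hb'⟩
        cases hb'
    refine ⟨?_⟩
    have e1 : Y ≃g (Y.induce u ⊕g Y.induce uᶜ) := (isoSumCompl Y u ucl).symm
    have e2 : Y.induce u ≃g H₁ :=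
      ((isoInduceInduce _ _ u).trans (isoSetCongr _ hval_u)).trans (isoInduceRangeInl H₁ H₂)
    have e3 : Y.induce uᶜ ≃g H₂.induce tᶜ :=
      ((isoInduceInduce _ _ uᶜ).trans (isoSetCongr _ hval_uc)).trans (isoInduceInr H₁ H₂ tᶜ).symm
    have e4 : (H₂.induce t ⊕g H₂.induce tᶜ) ≃g H₂ := isoSumCompl H₂ t tcl
    have e2' : Y.induce u ≃g H₂.induce t := e2.trans e_t.symm
    exact (e1.trans (isoSumCongr e2' e3)).trans e4

lemma cover_pair_structure (hconn : H₁.Connected) (VA VB : Set (β₁ ⊕ β₂))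
    (hcov : VA ∪ VB = Set.univ) (fA : (H₁ ⊕g H₂).induce VA ≃g H₁)
    (fB : (H₁ ⊕g H₂).induce VB ≃g H₂) :
    ∃ c : (H₁ ⊕g H₂).ConnectedComponent, VA = c.supp ∧ VB = c.suppᶜ := by
  classical
  -- cardinalities
  have hA : VA.ncard = Fintype.card β₁ := by
    rw [← Nat.card_coe_set_eq, Nat.card_congr fA.toEquiv, Nat.card_eq_fintype_card]
  have hB : VB.ncard = Fintype.card β₂ := by
    rw [← Nat.card_coe_set_eq, Nat.card_congr fB.toEquiv, Nat.card_eq_fintype_card]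
  have huniv : (Set.univ : Set (β₁ ⊕ β₂)).ncard = Fintype.card β₁ + Fintype.card β₂ := by
    rw [Set.ncard_univ, Nat.card_eq_fintype_card, Fintype.card_sum]
  have hint : (VA ∩ VB).ncard = 0 := by
    have := Set.ncard_union_add_ncard_inter VA VB (Set.toFinite _) (Set.toFinite _)
    rw [hcov, huniv, hA, hB] at this
    omega
  have hdisj : VA ∩ VB = ∅ := by
    rw [← Set.ncard_eq_zero (Set.toFinite _)]
    exact hint
  have hVB : VB = VAᶜ := by
    ext x
    constructor
    · intro hx hxA
      exact absurd (Set.mem_inter hxA hx) (by rw [hdisj]; exact id)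
    · intro hx
      rcases (Set.eq_univ_iff_forall.mp hcov x) with h | h
      · exact absurd h hx
      · exact h
  -- the graph with cross edges removed
  let H' : SimpleGraph (β₁ ⊕ β₂) :=
    { Adj := fun a b => (H₁ ⊕g H₂).Adj a b ∧ ((a ∈ VA ∧ b ∈ VA) ∨ (a ∉ VA ∧ b ∉ VA)),
      symm := by
        constructor; intro a b hab
        exact ⟨hab.1.symm, hab.2.elim (fun h => Or.inl ⟨h.2, h.1⟩) (fun h => Or.inr ⟨h.2, h.1⟩)⟩,
      loopless := ⟨fun a ha => (H₁ ⊕g H₂).irrefl ha.1⟩ }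
  have hle : H' ≤ (H₁ ⊕g H₂) := fun _ _ h => h.1
  have hind1 : H'.induce VA = (H₁ ⊕g H₂).induce VA := by
    ext ⟨a, ha⟩ ⟨b, hb⟩
    simp only [comap_adj, Function.Embedding.coe_subtype]
    exact ⟨fun h => h.1, fun h => ⟨h, Or.inl ⟨ha, hb⟩⟩⟩
  have hind2 : H'.induce VAᶜ = (H₁ ⊕g H₂).induce VAᶜ := by
    ext ⟨a, ha⟩ ⟨b, hb⟩
    simp only [comap_adj, Function.Embedding.coe_subtype]
    exact ⟨fun h => h.1, fun h => ⟨h, Or.inr ⟨ha, hb⟩⟩⟩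
  have clA' : ∀ ⦃a b : β₁ ⊕ β₂⦄, H'.Adj a b → (a ∈ VA ↔ b ∈ VA) := by
    intro a b hab
    rcases hab.2 with h | h
    · exact ⟨fun _ => h.2, fun _ => h.1⟩
    · exact ⟨fun ha => absurd ha h.1, fun hb => absurd hb h.2⟩
  have fA' : H'.induce VA ≃g H₁ := by rw [hind1]; exact fA
  have fB' : H'.induce VAᶜ ≃g H₂ := by
    rw [hind2]; exact (isoSetCongr _ hVB.symm).trans fB
  have eH : H' ≃g (H₁ ⊕g H₂) := (isoSumCompl H' VA clA').symm.trans (isoSumCongr fA' fB')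
  have hEq : H' = (H₁ ⊕g H₂) := eq_of_le_of_iso hle eH
  have clA : ∀ ⦃a b : β₁ ⊕ β₂⦄, (H₁ ⊕g H₂).Adj a b → (a ∈ VA ↔ b ∈ VA) := by
    intro a b hab
    rw [← hEq] at hab
    exact clA' hab
  have hconnA : ((H₁ ⊕g H₂).induce VA).Connected := fA.connected_iff.mpr hconn
  obtain ⟨c, hcsupp⟩ := eq_supp_of_connected hconnA clA
  exact ⟨c, hcsupp, by rw [hVB, hcsupp]⟩

lemma coverPairs_sum_eq (hconn : H₁.Connected) :
    coverPairs (H₁ ⊕g H₂) H₁ H₂ = numCompsIso (H₁ ⊕g H₂) H₁ := by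
  symm
  apply Nat.card_eq_of_bijective
    (f := fun c : {c : (H₁ ⊕g H₂).ConnectedComponent //
        Nonempty (((H₁ ⊕g H₂).induce c.supp) ≃g H₁)} =>
      (⟨(c.1.supp, c.1.suppᶜ), Set.union_compl_self _, c.2,
        compl_supp_iso H₁ H₂ hconn c.1 c.2⟩ :
        {p : Set (β₁ ⊕ β₂) × Set (β₁ ⊕ β₂) // p.1 ∪ p.2 = Set.univ ∧
          Nonempty (((H₁ ⊕g H₂).induce p.1) ≃g H₁) ∧
          Nonempty (((H₁ ⊕g H₂).induce p.2) ≃g H₂)}))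
  constructor
  · intro c c' h
    apply Subtype.ext
    apply SimpleGraph.ConnectedComponent.supp_injective
    exact congrArg (fun q => q.1.1) h
  · intro p
    obtain ⟨c, hA, hB⟩ := cover_pair_structure H₁ H₂ hconn p.1.1 p.1.2 p.2.1
      p.2.2.1.some p.2.2.2.some
    refine ⟨⟨c, ?_⟩, ?_⟩
    · rw [← hA]; exact p.2.2.1
    · apply Subtype.ext
      exact Prod.ext hA.symm hB.symm

end Core

section Counting
variable {W : Type} [Fintype W] {β₁ β₂ : Type}

lemma natCard_sigma {ι : Type} [Fintype ι] (f : ι → Type) [∀ i, Finite (f i)] :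
    Nat.card (Σ i, f i) = ∑ i, Nat.card (f i) := by
  letI : ∀ i, Fintype (f i) := fun i => Fintype.ofFinite _
  rw [Nat.card_eq_fintype_card, Fintype.card_sigma]
  exact Finset.sum_congr rfl fun i _ => Nat.card_eq_fintype_card.symm

noncomputable def coverFiberEquiv (X : SimpleGraph W) (A : SimpleGraph β₁)
    (B : SimpleGraph β₂) (s : Set W) :
    {p : Set W × Set W // p.1 ∪ p.2 = s ∧ Nonempty ((X.induce p.1) ≃g A) ∧
      Nonempty ((X.induce p.2) ≃g B)} ≃
    {q : Set ↥s × Set ↥s // q.1 ∪ q.2 = Set.univ ∧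
      Nonempty (((X.induce s).induce q.1) ≃g A) ∧
      Nonempty (((X.induce s).induce q.2) ≃g B)} where
  toFun p := ⟨(Subtype.val ⁻¹' p.1.1, Subtype.val ⁻¹' p.1.2), by
      rw [← Set.preimage_union, p.2.1]
      exact Subtype.coe_preimage_self s,
      ⟨((isoInduceInduce X s _).trans (isoSetCongr X (by
        rw [Subtype.image_preimage_coe]
        exact Set.inter_eq_right.mpr (fun x hx => p.2.1 ▸ Set.subset_union_left hx)))).trans
        p.2.2.1.some⟩,
      ⟨((isoInduceInduce X s _).trans (isoSetCongr X (by
        rw [Subtype.image_preimage_coe]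
        exact Set.inter_eq_right.mpr (fun x hx => p.2.1 ▸ Set.subset_union_right hx)))).trans
        p.2.2.2.some⟩⟩
  invFun q := ⟨(Subtype.val '' q.1.1, Subtype.val '' q.1.2), by
      rw [← Set.image_union, q.2.1, Set.image_univ, Subtype.range_coe],
      ⟨(isoInduceInduce X s q.1.1).symm.trans q.2.2.1.some⟩,
      ⟨(isoInduceInduce X s q.1.2).symm.trans q.2.2.2.some⟩⟩
  left_inv p := by
    apply Subtype.ext
    apply Prod.ext
    · show Subtype.val '' (Subtype.val ⁻¹' p.1.1) = p.1.1
      rw [Subtype.image_preimage_coe]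
      exact Set.inter_eq_right.mpr (fun x hx => p.2.1 ▸ Set.subset_union_left hx)
    · show Subtype.val '' (Subtype.val ⁻¹' p.1.2) = p.1.2
      rw [Subtype.image_preimage_coe]
      exact Set.inter_eq_right.mpr (fun x hx => p.2.1 ▸ Set.subset_union_right hx)
  right_inv q := by
    apply Subtype.ext
    apply Prod.ext
    · exact Set.preimage_image_eq _ Subtype.val_injective
    · exact Set.preimage_image_eq _ Subtype.val_injective

lemma counting (X : SimpleGraph W) (A : SimpleGraph β₁) (B : SimpleGraph β₂) :
    numInduced X A * numInduced X B = ∑ s : Set W, coverPairs (X.induce s) A B := by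
  classical
  rw [numInduced, numInduced, ← Nat.card_prod]
  have e0 : ({s : Set W // Nonempty ((X.induce s) ≃g A)} ×
      {s : Set W // Nonempty ((X.induce s) ≃g B)}) ≃
      {p : Set W × Set W // Nonempty ((X.induce p.1) ≃g A) ∧ Nonempty ((X.induce p.2) ≃g B)} :=
    Equiv.subtypeProdEquivProd.symm
  rw [Nat.card_congr e0]
  have e1 : {p : Set W × Set W // Nonempty ((X.induce p.1) ≃g A) ∧
      Nonempty ((X.induce p.2) ≃g B)} ≃
      Σ s : Set W, {p : Set W × Set W // p.1 ∪ p.2 = s ∧ Nonempty ((X.induce p.1) ≃g A) ∧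
        Nonempty ((X.induce p.2) ≃g B)} :=
    { toFun := fun p => ⟨p.1.1 ∪ p.1.2, ⟨p.1, rfl, p.2⟩⟩,
      invFun := fun x => ⟨x.2.1, x.2.2.2⟩,
      left_inv := fun p => rfl,
      right_inv := fun x => by
        rcases x with ⟨s, ⟨p, hp, h⟩⟩
        subst hp
        rfl }
  rw [Nat.card_congr e1, natCard_sigma]
  exact Finset.sum_congr rfl fun s _ => Nat.card_congr (coverFiberEquiv X A B s)

end Counting

theorem disconnected_recursion {V β₁ β₂ : Type} [Fintype V] [Fintype β₁] [Fintype β₂]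
    (G : SimpleGraph V) (H₁ : SimpleGraph β₁) (H₂ : SimpleGraph β₂)
    (hconn : H₁.Connected) (k : ℕ)
    (ι : Type) [Fintype ι] (m : ι → ℕ) (U : ∀ i, SimpleGraph (Fin (m i)))
    (hJ : ∀ i, memJ (U i) H₁ H₂)
    (hnotH : ∀ i, IsEmpty ((U i) ≃g (H₁ ⊕g H₂)))
    (hdistinct : ∀ i j, i ≠ j → IsEmpty ((U i) ≃g (U j)))
    (hcomplete : ∀ (m' : ℕ) (U' : SimpleGraph (Fin m')), memJ U' H₁ H₂ →
      IsEmpty (U' ≃g (H₁ ⊕g H₂)) → ∃ i, Nonempty (U' ≃g U i)) :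
    (numCompsIso (H₁ ⊕g H₂) H₁ : ℤ) * numInduced (coloringGraph G k) (H₁ ⊕g H₂) =
      (numInduced (coloringGraph G k) H₁ : ℤ) * numInduced (coloringGraph G k) H₂ -
        ∑ i : ι, (coverPairs (U i) H₁ H₂ : ℤ) * numInduced (coloringGraph G k) (U i) := by
  classical
  set W := {f : V → Fin k // ∀ u w, G.Adj u w → f u ≠ f w} with hW
  haveI : Fintype W := Fintype.ofFinite _
  set X : SimpleGraph W := coloringGraph G k with hX
  have key : numInduced X H₁ * numInduced X H₂ =
      numCompsIso (H₁ ⊕g H₂) H₁ * numInduced X (H₁ ⊕g H₂) +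
      ∑ i, coverPairs (U i) H₁ H₂ * numInduced X (U i) := by
    rw [counting X H₁ H₂]
    have hpt : ∀ s : Set W, coverPairs (X.induce s) H₁ H₂ =
        (if Nonempty ((X.induce s) ≃g (H₁ ⊕g H₂)) then numCompsIso (H₁ ⊕g H₂) H₁ else 0) +
        ∑ i, (if Nonempty ((X.induce s) ≃g U i) then coverPairs (U i) H₁ H₂ else 0) := by
      intro s
      by_cases h1 : Nonempty ((X.induce s) ≃g (H₁ ⊕g H₂))
      · rw [if_pos h1]
        have hz : ∀ i ∈ Finset.univ (α := ι),
            (if Nonempty ((X.induce s) ≃g U i) then coverPairs (U i) H₁ H₂ else 0) = 0 := by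
          intro i _
          rw [if_neg]
          intro hi
          exact (hnotH i).false (hi.some.symm.trans h1.some)
        rw [Finset.sum_congr rfl hz, Finset.sum_const, smul_zero, add_zero]
        rw [coverPairs_congr h1.some]
        exact coverPairs_sum_eq H₁ H₂ hconn
      · rw [if_neg h1, zero_add]
        by_cases h2 : ∃ i, Nonempty ((X.induce s) ≃g U i)
        · obtain ⟨i, hi⟩ := h2
          rw [Finset.sum_eq_single i]
          · rw [if_pos hi]
            exact coverPairs_congr hi.some
          · intro j _ hj
            rw [if_neg]
            intro hj'
            exact (hdistinct i j (Ne.symm hj)).false (hi.some.symm.trans hj'.some)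
          · intro h
            exact absurd (Finset.mem_univ i) h
        · have hz : coverPairs (X.induce s) H₁ H₂ = 0 := by
            rw [coverPairs]
            rw [Nat.card_eq_zero]
            left
            constructor
            intro p
            have hmemJ : memJ (X.induce s) H₁ H₂ := ⟨p.1.1, p.1.2, p.2⟩
            haveI : Fintype ↥s := Fintype.ofFinite _
            have hiso := toFinGraphIso (X.induce s)
            have hmemJ' := memJ_congr hiso hmemJ
            have hempty : IsEmpty ((X.induce s).comap
                ((Fintype.equivFin ↥s).symm : Fin (Fintype.card ↥s) → ↥s) ≃g (H₁ ⊕g H₂)) := by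
              constructor
              intro f
              exact h1 ⟨hiso.trans f⟩
            obtain ⟨i, ⟨f⟩⟩ := hcomplete _ _ hmemJ' hempty
            exact h2 ⟨i, ⟨hiso.trans f⟩⟩
          rw [hz]
          symm
          rw [Finset.sum_eq_zero]
          intro i _
          rw [if_neg]
          intro hi
          exact h2 ⟨i, hi⟩
    rw [Finset.sum_congr rfl fun s _ => hpt s, Finset.sum_add_distrib]
    congr 1
    · have hni : numInduced X (H₁ ⊕g H₂) = (Finset.univ.filter
          (fun s : Set W => Nonempty ((X.induce s) ≃g (H₁ ⊕g H₂)))).card := by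
        rw [numInduced, Nat.card_eq_fintype_card, Fintype.card_subtype]
      rw [hni, ← Finset.sum_filter, Finset.sum_const, smul_eq_mul, mul_comm]
    · rw [Finset.sum_comm]
      refine Finset.sum_congr rfl fun i _ => ?_
      have hni : numInduced X (U i) = (Finset.univ.filter
          (fun s : Set W => Nonempty ((X.induce s) ≃g U i))).card := by
        rw [numInduced, Nat.card_eq_fintype_card, Fintype.card_subtype]
      rw [hni, ← Finset.sum_filter, Finset.sum_const, smul_eq_mul, mul_comm]
  have keyZ := congrArg (fun n : ℕ => (n : ℤ)) key
  push_cast at keyZ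
  linarith [keyZ]
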